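/- arXiv:2201.09297 — 2 statements merged into one kernel-verified Lean document; each statement's English description precedes it below -/
import Mathlib

section
/- For every n, q ∈ ℤ⁺, for every arena A with n nodes, every subset U of its nodes, and every q-state strategy S₁ of Player 0 in A, there exists a chromatic (q+1)^n-state strategy S₂ of Player 0 in A such that col(S₂, U) ⊆ col(S₁, U). -/
/-- An arena over a set of colors `C`. -/
structure Arena (C : Type) where
  V : Type
  E : Type
  finV : Fintype V
  finE : Fintype E
  /-- `isP0 v` means node `v` is controlled by Player 0. -/
  isP0 : V → Prop
  source : E → V
  target : E → V
  col : E → C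
  out : ∀ v : V, ∃ e : E, source e = v

namespace Arena

variable {C : Type} (A : Arena C)

/-- `PathFrom v es w` : the edge list `es` forms a finite path from `v` to `w`. -/
def PathFrom : A.V → List A.E → A.V → Prop
  | v, [], w => v = w
  | v, e :: es, w => A.source e = v ∧ PathFrom (A.target e) es w

/-- The endpoint of the edge list `es` started at `v`. -/
def ptarget (v : A.V) (es : List A.E) : A.V := es.foldl (fun _ e => A.target e) v

/-- A strategy of Player 0: given the starting node and the finite play so far,
it outputs the next edge. -/
def Strategy (A : Arena C) : Type := A.V → List A.E → A.E

/-- A legal strategy moves along an edge leaving the current node. -/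
def IsStrategy (S : A.Strategy) : Prop :=
  ∀ v es, A.source (S v es) = A.ptarget v es

/-- The finite edge list `es`, viewed as a play from `v`, is consistent with `S`:
at every prefix ending in a Player-0 node, the next edge is the one chosen by `S`. -/
def ConsFrom (S : A.Strategy) (v : A.V) (es : List A.E) : Prop :=
  ∀ p e r, es = p ++ e :: r → A.isP0 (A.ptarget v p) → e = S v p

/-- `P` is an infinite path starting at `v`. -/
def InfPlay (v : A.V) (P : ℕ → A.E) : Prop :=
  A.source (P 0) = v ∧ ∀ i, A.target (P i) = A.source (P (i + 1))

/-- The length-`k` prefix of an infinite play, as a list. -/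
def prefixList (P : ℕ → A.E) (k : ℕ) : List A.E := List.ofFn (fun i : Fin k => P i)

/-- `colSet S v` is the set of color sequences of infinite plays from `v` consistent with `S`. -/
def colSet (S : A.Strategy) (v : A.V) : Set (ℕ → C) :=
  { γ | ∃ P : ℕ → A.E, A.InfPlay v P ∧ (∀ k, A.ConsFrom S v (A.prefixList P k)) ∧
      γ = fun i => A.col (P i) }

/-- `colSetU S U = ⋃ v ∈ U, colSet S v`. -/
def colSetU (S : A.Strategy) (U : Set A.V) : Set (ℕ → C) := ⋃ v ∈ U, A.colSet S v

/-- State of a memory structure after reading a list of edges. -/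
def mstate {M : Type} (δ : M → A.E → M) (m0 : M) (es : List A.E) : M := es.foldl δ m0

/-- `S` is implemented by the memory structure `(M, m0, δ)`: its moves depend only
on the current node and the current memory state. -/
def HasMemory (S : A.Strategy) (M : Type) (m0 : M) (δ : M → A.E → M) : Prop :=
  ∀ v1 es1 v2 es2, A.ptarget v1 es1 = A.ptarget v2 es2 →
    A.mstate δ m0 es1 = A.mstate δ m0 es2 → S v1 es1 = S v2 es2

/-- A memory structure is chromatic if transitions depend only on colors of edges. -/
def ChromaticMem (M : Type) (δ : M → A.E → M) : Prop :=
  ∃ σ : M → C → M, ∀ m e, δ m e = σ m (A.col e)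

/-- `S` is a `q`-state strategy. -/
def IsQState (S : A.Strategy) (q : ℕ) : Prop :=
  ∃ (M : Type) (_ : Fintype M) (m0 : M) (δ : M → A.E → M),
    Fintype.card M = q ∧ A.HasMemory S M m0 δ

/-- `S` is a chromatic `q`-state strategy. -/
def IsChromaticQState (S : A.Strategy) (q : ℕ) : Prop :=
  ∃ (M : Type) (_ : Fintype M) (m0 : M) (δ : M → A.E → M),
    Fintype.card M = q ∧ A.ChromaticMem M δ ∧ A.HasMemory S M m0 δ


theorem ptarget_nil (v : A.V) : A.ptarget v [] = v := rfl

theorem ptarget_concat (v : A.V) (es : List A.E) (e : A.E) :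
    A.ptarget v (es ++ [e]) = A.target e := by
  simp [Arena.ptarget, List.foldl_append]

theorem mstate_concat {M : Type} (δ : M → A.E → M) (m0 : M) (es : List A.E) (e : A.E) :
    A.mstate δ m0 (es ++ [e]) = δ (A.mstate δ m0 es) e := by
  simp [Arena.mstate, List.foldl_append]

theorem pathFrom_target {v w : A.V} {es : List A.E} (h : A.PathFrom v es w) :
    w = A.ptarget v es := by
  induction es generalizing v with
  | nil => exact h.symm
  | cons e es ih =>
    obtain ⟨h1, h2⟩ := h
    simpa [Arena.ptarget] using ih h2

theorem pathFrom_concat {v w : A.V} {es : List A.E} (h : A.PathFrom v es w) (e : A.E)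
    (hs : A.source e = w) : A.PathFrom v (es ++ [e]) (A.target e) := by
  induction es generalizing v with
  | nil => exact ⟨h ▸ hs, rfl⟩
  | cons e' es ih => exact ⟨h.1, ih h.2⟩

theorem pathFrom_prefix {v w : A.V} {es t : List A.E} (h : A.PathFrom v (es ++ t) w) :
    A.PathFrom v es (A.ptarget v es) := by
  induction es generalizing v with
  | nil => rfl
  | cons e' es ih =>
    refine ⟨h.1, ?_⟩
    simpa [Arena.ptarget] using ih h.2

theorem pathFrom_concat_elim {v w : A.V} {es : List A.E} {e : A.E}
    (h : A.PathFrom v (es ++ [e]) w) : A.source e = A.ptarget v es := by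
  induction es generalizing v with
  | nil => exact h.1
  | cons e' es ih =>
    simpa [Arena.ptarget] using ih h.2

theorem consFrom_prefix {S : A.Strategy} {u : A.V} {es t : List A.E}
    (h : A.ConsFrom S u (es ++ t)) : A.ConsFrom S u es := by
  intro p e r hr hp0
  exact h p e (r ++ t) (by simp [hr]) hp0

theorem consFrom_concat {S : A.Strategy} {u : A.V} {es : List A.E} {e0 : A.E}
    (h : A.ConsFrom S u es) (hmove : A.isP0 (A.ptarget u es) → e0 = S u es) :
    A.ConsFrom S u (es ++ [e0]) := by
  intro p e r hr hp0
  rcases r.eq_nil_or_concat with rfl | ⟨r', a, rfl⟩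
  · obtain ⟨rfl, he⟩ : es = p ∧ e0 = e := by
      have := List.append_inj' hr rfl
      simpa using this
    exact he ▸ hmove hp0
  · have hr2 : es ++ [e0] = (p ++ e :: r') ++ [a] := by simpa using hr
    have hes := (List.append_inj' hr2 rfl).1
    exact h p e r' hes hp0

theorem prefixList_succ (P : ℕ → A.E) (k : ℕ) :
    A.prefixList P (k + 1) = A.prefixList P k ++ [P k] := by
  show List.ofFn _ = List.ofFn _ ++ [P k]
  rw [List.ofFn_succ']
  simp [List.concat_eq_append]

theorem prefixList_length (P : ℕ → A.E) (k : ℕ) : (A.prefixList P k).length = k := by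
  simp [Arena.prefixList]

theorem prefixList_take (P : ℕ → A.E) {k n : ℕ} (h : k ≤ n) :
    (A.prefixList P n).take k = A.prefixList P k := by
  induction n with
  | zero =>
    obtain rfl : k = 0 := Nat.le_zero.mp h
    simp [Arena.prefixList]
  | succ n ih =>
    rcases Nat.lt_or_ge k (n+1) with hk | hk
    · rw [prefixList_succ, List.take_append_of_le_length (by simp [prefixList_length]; omega),
        ih (by omega)]
    · have : k = n + 1 := by omega
      subst this
      simp [List.take_of_length_le, prefixList_length]

theorem source_P {v : A.V} {P : ℕ → A.E} (h : A.InfPlay v P) (k : ℕ) :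
    A.source (P k) = A.ptarget v (A.prefixList P k) := by
  induction k with
  | zero => simpa [Arena.prefixList, Arena.ptarget] using h.1
  | succ k ih =>
    rw [prefixList_succ, ptarget_concat, h.2 k]


end Arena

attribute [instance] Arena.finV Arena.finE

open Arena

section Construction

open Arena

variable {C : Type} (A : Arena C) (U : Set A.V) (S₁ : A.Strategy)
  {M : Type} (m0 : M) (δ : M → A.E → M)

/-- `(w, m)` is reachable: some play from `U` consistent with `S₁` ends at `w` with memory `m`. -/
def Wit (w : A.V) (m : M) : Prop :=
  ∃ u es, u ∈ U ∧ A.PathFrom u es w ∧ A.ConsFrom S₁ u es ∧ A.mstate δ m0 es = m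

open Classical in
/-- The move of `S₁` at node `w` with memory `m` (well-defined by `HasMemory`). -/
noncomputable def pick (w : A.V) (m : M) : A.E :=
  if h : Wit A U S₁ m0 δ w m then S₁ h.choose h.choose_spec.choose
  else (A.out w).choose

theorem pick_source (hS₁ : A.IsStrategy S₁) (w : A.V) (m : M) :
    A.source (pick A U S₁ m0 δ w m) = w := by
  unfold pick
  split
  · next h =>
    have hspec := h.choose_spec.choose_spec
    rw [hS₁]
    exact (Arena.pathFrom_target A hspec.2.1).symm
  · exact (A.out w).choose_spec

theorem pick_eq (hmem : A.HasMemory S₁ M m0 δ) {w : A.V} {m : M} {u : A.V} {es : List A.E}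
    (hu : u ∈ U) (hp : A.PathFrom u es w) (hc : A.ConsFrom S₁ u es)
    (hm : A.mstate δ m0 es = m) : pick A U S₁ m0 δ w m = S₁ u es := by
  have h : Wit A U S₁ m0 δ w m := ⟨u, es, hu, hp, hc, hm⟩
  rw [pick, dif_pos h]
  have hspec := h.choose_spec.choose_spec
  exact hmem _ _ _ _
    ((Arena.pathFrom_target A hspec.2.1).symm.trans (Arena.pathFrom_target A hp))
    (hspec.2.2.2.trans hm.symm)

/-- Possible new memory values when reading color `c` and landing at `w`. -/
def NewMem (f : A.V → Option M) (c : C) (w : A.V) (m' : M) : Prop :=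
  ∃ v m e, f v = some m ∧ A.source e = v ∧ A.target e = w ∧ A.col e = c ∧
    (A.isP0 v → e = pick A U S₁ m0 δ v m) ∧ δ m e = m'

open Classical in
/-- The chromatic transition function on `A.V → Option M`. -/
noncomputable def sig (f : A.V → Option M) (c : C) (w : A.V) : Option M :=
  if h : ∃ m', NewMem A U S₁ m0 δ f c w m' then some h.choose else none

theorem sig_spec {f : A.V → Option M} {c : C} {w : A.V} {m' : M}
    (h : sig A U S₁ m0 δ f c w = some m') : NewMem A U S₁ m0 δ f c w m' := by
  unfold sig at h
  split at h
  · next hex => cases h; exact hex.choose_spec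
  · cases h

theorem sig_isSome {f : A.V → Option M} {c : C} {w : A.V}
    (h : ∃ m', NewMem A U S₁ m0 δ f c w m') : ∃ m', sig A U S₁ m0 δ f c w = some m' := by
  rw [sig, dif_pos h]
  exact ⟨h.choose, rfl⟩

open Classical in
/-- Initial chromatic memory. -/
noncomputable def f0 : A.V → Option M :=
  fun w => if w ∈ U then some m0 else none

/-- The chromatic memory update on edges. -/
noncomputable def delta' (f : A.V → Option M) (e : A.E) : A.V → Option M :=
  sig A U S₁ m0 δ f (A.col e)

/-- A default outgoing edge. -/
noncomputable def defaultEdge (A : Arena C) (w : A.V) : A.E := (A.out w).choose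

theorem defaultEdge_source (A : Arena C) (w : A.V) : A.source (defaultEdge A w) = w :=
  (A.out w).choose_spec

/-- The chromatic strategy. -/
noncomputable def S2 (v : A.V) (es : List A.E) : A.E :=
  ((A.mstate (delta' A U S₁ m0 δ) (f0 A U m0) es) (A.ptarget v es)).elim
    (defaultEdge A (A.ptarget v es)) (pick A U S₁ m0 δ (A.ptarget v es))

theorem S2_isStrategy (hS₁ : A.IsStrategy S₁) : A.IsStrategy (S2 A U S₁ m0 δ) := by
  intro v es
  unfold S2
  cases h : (A.mstate (delta' A U S₁ m0 δ) (f0 A U m0) es) (A.ptarget v es) with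
  | none => exact defaultEdge_source A _
  | some m => exact pick_source A U S₁ m0 δ hS₁ _ m

theorem S2_hasMemory :
    A.HasMemory (S2 A U S₁ m0 δ) (A.V → Option M) (f0 A U m0) (delta' A U S₁ m0 δ) := by
  intro v1 es1 v2 es2 h1 h2
  unfold S2
  rw [h1, h2]


theorem S2_eq_pick {v : A.V} {es : List A.E} {m : M}
    (h : (A.mstate (delta' A U S₁ m0 δ) (f0 A U m0) es) (A.ptarget v es) = some m) :
    S2 A U S₁ m0 δ v es = pick A U S₁ m0 δ (A.ptarget v es) m := by
  unfold S2
  rw [h]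
  rfl

end Construction



section MainLemmas

open Arena

variable {C : Type} (A : Arena C) (U : Set A.V) (S₁ : A.Strategy)
  {M : Type} (m0 : M) (δ : M → A.E → M) (P : ℕ → A.E)

theorem consFrom_nil (S : A.Strategy) (u : A.V) : A.ConsFrom S u [] := by
  intro p e r h
  simp at h

theorem invariant (hmem : A.HasMemory S₁ M m0 δ)
    {v : A.V} (hv : v ∈ U) (hplay : A.InfPlay v P)
    (hcons : ∀ k, A.ConsFrom (S2 A U S₁ m0 δ) v (A.prefixList P k)) (k : ℕ) :
    (∀ w m, A.mstate (delta' A U S₁ m0 δ) (f0 A U m0) (A.prefixList P k) w = some m →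
      ∃ u es, u ∈ U ∧ A.PathFrom u es w ∧ A.ConsFrom S₁ u es ∧ A.mstate δ m0 es = m ∧
        es.map A.col = (A.prefixList P k).map A.col) ∧
    ∃ m, A.mstate (delta' A U S₁ m0 δ) (f0 A U m0) (A.prefixList P k)
        (A.ptarget v (A.prefixList P k)) = some m := by
  classical
  induction k with
  | zero =>
    have hpre : A.prefixList P 0 = [] := by simp [Arena.prefixList]
    rw [hpre]
    constructor
    · intro w m h
      have h' : (if w ∈ U then some m0 else none) = some m := h
      by_cases hw : w ∈ U
      · rw [if_pos hw] at h'
        obtain rfl : m0 = m := by simpa using h'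
        exact ⟨w, [], hw, rfl, consFrom_nil A S₁ w, rfl, rfl⟩
      · rw [if_neg hw] at h'
        simp at h'
    · refine ⟨m0, ?_⟩
      show (if v ∈ U then some m0 else none) = some m0
      rw [if_pos hv]
  | succ k ih =>
    have hsp := prefixList_succ A P k
    have hsrc := source_P A hplay k
    have hnode : A.ptarget v (A.prefixList P (k + 1)) = A.target (P k) := by
      rw [hsp, ptarget_concat]
    have hms : ∀ w, A.mstate (delta' A U S₁ m0 δ) (f0 A U m0) (A.prefixList P (k+1)) w =
        sig A U S₁ m0 δ (A.mstate (delta' A U S₁ m0 δ) (f0 A U m0) (A.prefixList P k))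
          (A.col (P k)) w := by
      intro w
      rw [hsp, mstate_concat]
      rfl
    constructor
    · intro w m' h
      rw [hms] at h
      obtain ⟨v', mm, e, hfv', hse, hte, hce, hP0, hδ⟩ := sig_spec A U S₁ m0 δ h
      obtain ⟨u, es, huU, hpath, hconsS1, hmst, hcols⟩ := ih.1 v' mm hfv'
      have htv : v' = A.ptarget u es := pathFrom_target A hpath
      refine ⟨u, es ++ [e], huU, ?_, ?_, ?_, ?_⟩
      · have := pathFrom_concat A hpath e (hse.trans rfl)
        rwa [hte] at this
      · refine consFrom_concat A hconsS1 (fun hp0 => ?_)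
        rw [← htv] at hp0
        rw [hP0 hp0]
        exact pick_eq A U S₁ m0 δ hmem huU hpath hconsS1 hmst
      · rw [mstate_concat, hmst, hδ]
      · rw [hsp]
        simp [hcols, hce]
    · rw [hnode]
      have hm := ih.2
      obtain ⟨m, hm⟩ := hm
      have hnew : ∃ m', NewMem A U S₁ m0 δ
          (A.mstate (delta' A U S₁ m0 δ) (f0 A U m0) (A.prefixList P k))
          (A.col (P k)) (A.target (P k)) m' := by
        refine ⟨δ m (P k), A.ptarget v (A.prefixList P k), m, P k, hm, hsrc.symm ▸ hsrc, rfl, rfl,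
          fun hp0 => ?_, rfl⟩
        have hc := hcons (k+1) (A.prefixList P k) (P k) [] (by rw [hsp]) hp0
        rw [hc]
        exact S2_eq_pick A U S₁ m0 δ hm
      obtain ⟨m', hm'⟩ := sig_isSome A U S₁ m0 δ hnew
      exact ⟨m', by rw [hms]; exact hm'⟩

/-- Finite `S₁`-consistent plays from `U` whose colors match those of `P`. -/
def InT (u : A.V) (es : List A.E) : Prop :=
  u ∈ U ∧ A.ConsFrom S₁ u es ∧ A.PathFrom u es (A.ptarget u es) ∧
    es.map A.col = (A.prefixList P es.length).map A.col

theorem InT_prefix {u : A.V} {es t : List A.E} (h : InT A U S₁ P u (es ++ t)) :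
    InT A U S₁ P u es := by
  obtain ⟨hu, hc, hp, hcol⟩ := h
  refine ⟨hu, consFrom_prefix A hc, pathFrom_prefix A hp, ?_⟩
  have h1 : ((es ++ t).map A.col).take es.length = es.map A.col := by
    rw [← List.map_take, List.take_left]
  have h2 : ((A.prefixList P (es ++ t).length).map A.col).take es.length =
      (A.prefixList P es.length).map A.col := by
    rw [← List.map_take, prefixList_take A P (by simp)]
  rw [← h1, ← h2, hcol]

theorem levels_nonempty (hmem : A.HasMemory S₁ M m0 δ)
    {v : A.V} (hv : v ∈ U) (hplay : A.InfPlay v P)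
    (hcons : ∀ k, A.ConsFrom (S2 A U S₁ m0 δ) v (A.prefixList P k)) (k : ℕ) :
    ∃ u es, InT A U S₁ P u es ∧ es.length = k := by
  obtain ⟨hall, m, hm⟩ := invariant A U S₁ m0 δ P hmem hv hplay hcons k
  obtain ⟨u, es, huU, hpath, hconsS1, hmst, hcols⟩ := hall _ m hm
  have hlen : es.length = k := by
    have := congrArg List.length hcols
    simpa [prefixList_length] using this
  refine ⟨u, es, ⟨huU, hconsS1, ?_, by rw [hlen]; exact hcols⟩, hlen⟩
  rw [← pathFrom_target A hpath]
  exact hpath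

/-- `es` can be extended to an element of `InT` of any length. -/
def ExtP (u : A.V) (es : List A.E) : Prop :=
  ∀ k, ∃ t : List A.E, t.length = k ∧ InT A U S₁ P u (es ++ t)

theorem extP_root (hlev : ∀ k, ∃ u es, InT A U S₁ P u es ∧ es.length = k) :
    ∃ u, ExtP A U S₁ P u [] := by
  by_contra hno
  push_neg at hno
  simp only [ExtP, not_forall, not_exists, List.nil_append] at hno
  choose k hk using hno
  obtain ⟨u, es, hes, hlen⟩ := hlev (Finset.univ.sup k)
  have hku : k u ≤ Finset.univ.sup k := Finset.le_sup (Finset.mem_univ u)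
  refine hk u (es.take (k u)) ⟨?_, ?_⟩
  · simp [hlen]; omega
  · have : es = es.take (k u) ++ es.drop (k u) := (List.take_append_drop _ _).symm
    rw [this] at hes
    exact InT_prefix A U S₁ P hes

theorem extP_step {u : A.V} {es : List A.E} (hext : ExtP A U S₁ P u es) :
    ∃ e, ExtP A U S₁ P u (es ++ [e]) := by
  by_contra hno
  push_neg at hno
  simp only [ExtP, not_forall, not_exists] at hno
  choose k hk using hno
  obtain ⟨t, hlen, hint⟩ := hext (Finset.univ.sup k + 1)
  obtain ⟨e, t', rfl⟩ : ∃ e t', t = e :: t' := by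
    cases t with
    | nil => simp at hlen
    | cons e t' => exact ⟨e, t', rfl⟩
  have hke : k e ≤ Finset.univ.sup k := Finset.le_sup (Finset.mem_univ e)
  have hlent' : t'.length = Finset.univ.sup k := by simpa using hlen
  refine hk e (t'.take (k e)) ⟨?_, ?_⟩
  · simp [hlent']; omega
  · have heq : es ++ e :: t' = (es ++ [e] ++ t'.take (k e)) ++ t'.drop (k e) := by
      simp [List.take_append_drop]
    rw [heq] at hint
    exact InT_prefix A U S₁ P hint

/-- The König konigChain of extendable finite plays. -/
noncomputable def konigChain (u : A.V) (h : ExtP A U S₁ P u []) :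
    ℕ → {es : List A.E // ExtP A U S₁ P u es}
  | 0 => ⟨[], h⟩
  | k + 1 =>
    ⟨(konigChain u h k).1 ++ [(extP_step A U S₁ P (konigChain u h k).2).choose],
      (extP_step A U S₁ P (konigChain u h k).2).choose_spec⟩

theorem extP_inT {u : A.V} {es : List A.E} (h : ExtP A U S₁ P u es) : InT A U S₁ P u es := by
  obtain ⟨t, hlen, hint⟩ := h 0
  obtain rfl : t = [] := List.length_eq_zero_iff.mp hlen
  simpa using hint

theorem chain_eq_prefixList (u : A.V) (h : ExtP A U S₁ P u []) (k : ℕ) :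
    (konigChain A U S₁ P u h k).1 =
      A.prefixList (fun i => (extP_step A U S₁ P (konigChain A U S₁ P u h i).2).choose) k := by
  induction k with
  | zero => simp [konigChain, Arena.prefixList]
  | succ k ih =>
    rw [prefixList_succ]
    show (konigChain A U S₁ P u h k).1 ++ _ = _
    exact congrArg (fun l => l ++ [(extP_step A U S₁ P (konigChain A U S₁ P u h k).2).choose]) ih

end MainLemmas

/-- For every `n, q ≥ 1`, every arena with `n` nodes, every subset `U` of its
nodes, and every `q`-state strategy `S₁` of Player 0, there is a chromatic
`(q+1)^n`-state strategy `S₂` of Player 0 with `col(S₂, U) ⊆ col(S₁, U)`. -/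
theorem chromatic_upper_bound {C : Type} (n q : ℕ) (hn : 1 ≤ n) (hq : 1 ≤ q)
    (A : Arena C) (hcard : Fintype.card A.V = n)
    (U : Set A.V)
    (S₁ : A.Strategy) (hS₁ : A.IsStrategy S₁) (hq₁ : A.IsQState S₁ q) :
    ∃ S₂ : A.Strategy, A.IsStrategy S₂ ∧ A.IsChromaticQState S₂ ((q + 1) ^ n) ∧
      A.colSetU S₂ U ⊆ A.colSetU S₁ U := by
  classical
  obtain ⟨M, instM, m0, δ, hMcard, hmem⟩ := hq₁
  refine ⟨S2 A U S₁ m0 δ, S2_isStrategy A U S₁ m0 δ hS₁,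
    ⟨(A.V → Option M), inferInstance, f0 A U m0, delta' A U S₁ m0 δ, ?_,
      ⟨sig A U S₁ m0 δ, fun _ _ => rfl⟩, S2_hasMemory A U S₁ m0 δ⟩, ?_⟩
  · rw [Fintype.card_fun, Fintype.card_option, hMcard, hcard]
  · intro γ hγ
    change _ ∈ ⋃ v ∈ U, A.colSet (S2 A U S₁ m0 δ) v at hγ
    rw [Set.mem_iUnion₂] at hγ
    obtain ⟨v, hv, hmem2⟩ := hγ
    obtain ⟨P, hplay, hcons, rfl⟩ := hmem2
    have hlev := levels_nonempty A U S₁ m0 δ P hmem hv hplay hcons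
    obtain ⟨u, hu⟩ := extP_root A U S₁ P hlev
    set P' : ℕ → A.E := fun i => (extP_step A U S₁ P (konigChain A U S₁ P u hu i).2).choose
      with hP'
    have hpre : ∀ k, A.prefixList P' k = (konigChain A U S₁ P u hu k).1 := fun k =>
      (chain_eq_prefixList A U S₁ P u hu k).symm
    have hint : ∀ k, InT A U S₁ P u (A.prefixList P' k) := by
      intro k
      rw [hpre]
      exact extP_inT A U S₁ P (konigChain A U S₁ P u hu k).2
    have huU : u ∈ U := (hint 0).1
    have hconsS1 : ∀ k, A.ConsFrom S₁ u (A.prefixList P' k) := fun k => (hint k).2.1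
    have hcol : ∀ i, A.col (P' i) = A.col (P i) := by
      intro i
      have h := (hint (i + 1)).2.2.2
      rw [prefixList_length] at h
      have h2 : (List.ofFn fun j : Fin (i + 1) => A.col (P' j)) =
          List.ofFn fun j : Fin (i + 1) => A.col (P j) := by
        simpa [Arena.prefixList, List.map_ofFn, Function.comp_def] using h
      have h3 := List.ofFn_inj.mp h2
      simpa using congrFun h3 ⟨i, Nat.lt_succ_self i⟩
    have hsrc' : ∀ k, A.source (P' k) = A.ptarget u (A.prefixList P' k) := by
      intro k
      have hp := (hint (k + 1)).2.2.1
      rw [prefixList_succ] at hp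
      exact pathFrom_concat_elim A hp
    have hplay' : A.InfPlay u P' := by
      constructor
      · have := hsrc' 0
        simpa [Arena.prefixList, Arena.ptarget] using this
      · intro i
        rw [hsrc' (i + 1), prefixList_succ, ptarget_concat]
    change _ ∈ ⋃ v ∈ U, A.colSet S₁ v
    rw [Set.mem_iUnion₂]
    exact ⟨u, huU, P', hplay', hconsS1, funext fun i => (hcol i).symm⟩
end

section
/- For every n, q ∈ ℤ⁺ there exists an arena A with n + 3 nodes over a finite set of colors, a node u of A, and a q-state strategy S₁ of Player 0 in A, such that every chromatic Q-state strategy S₂ of Player 0 with col(S₂, u) ⊆ col(S₁, u) satisfies Q ≥ q^n. -/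
open Arena

/-! ### Auxiliary generic lemmas about arenas -/

namespace ChromLB

section Generic

variable {C : Type} (A : Arena C)

@[simp] theorem pathFrom_nil {v w : A.V} : A.PathFrom v [] w ↔ v = w := Iff.rfl

@[simp] theorem pathFrom_cons {v w : A.V} {e : A.E} {es : List A.E} :
    A.PathFrom v (e :: es) w ↔ A.source e = v ∧ A.PathFrom (A.target e) es w := Iff.rfl

theorem pathFrom_append {l₁ : List A.E} {v w : A.V} (h : A.PathFrom v l₁ w)
    {l₂ : List A.E} {x : A.V} (h2 : A.PathFrom w l₂ x) : A.PathFrom v (l₁ ++ l₂) x := by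
  induction l₁ generalizing v with
  | nil => have hv : v = w := h; rw [List.nil_append, hv]; exact h2
  | cons e l ih =>
    obtain ⟨h1, hp⟩ := (pathFrom_cons A).mp h
    exact ⟨h1, ih hp⟩

theorem prefixList_succ (P : ℕ → A.E) (k : ℕ) :
    A.prefixList P (k + 1) = A.prefixList P k ++ [P k] := by
  simp only [Arena.prefixList]
  rw [List.ofFn_succ']
  simp [List.concat_eq_append]

@[simp] theorem prefixList_len (P : ℕ → A.E) (k : ℕ) :
    (A.prefixList P k).length = k := by simp [Arena.prefixList]

theorem ptarget_append (v : A.V) (l : List A.E) (e : A.E) :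
    A.ptarget v (l ++ [e]) = A.target e := by
  simp [Arena.ptarget, List.foldl_append]

theorem ptarget_prefix_succ (v : A.V) (P : ℕ → A.E) (k : ℕ) :
    A.ptarget v (A.prefixList P (k + 1)) = A.target (P k) := by
  rw [prefixList_succ, ptarget_append]

theorem consFrom_decomp (P : ℕ → A.E) {k : ℕ} {p : List A.E} {e : A.E} {r : List A.E}
    (hk : A.prefixList P k = p ++ e :: r) :
    p = A.prefixList P p.length ∧ e = P p.length := by
  have hlen : p.length + (r.length + 1) = k := by
    have := congrArg List.length hk
    simpa [Arena.prefixList] using this.symm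
  have hpk : p.length < k := by omega
  constructor
  · have h1 : (A.prefixList P k).take p.length = p := by
      rw [hk]; exact List.take_left (l₁ := p) (l₂ := e :: r)
    rw [← h1]
    apply List.ext_getElem
    · simp only [List.length_take, prefixList_len]
      try omega
    · intro m hm1 hm2
      simp [Arena.prefixList, List.getElem_take]
  · have hl2 : p.length < (p ++ e :: r).length := by simp
    have h1 : (A.prefixList P k)[p.length]'(by simpa using hpk) =
        (p ++ e :: r)[p.length]'hl2 := List.getElem_of_eq hk _
    have h2 : (A.prefixList P k)[p.length]'(by simpa using hpk) = P p.length := by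
      simp [Arena.prefixList]
    have h3 : (p ++ e :: r)[p.length]'hl2 = e := by
      rw [List.getElem_append_right (le_refl p.length)]
      simp
    rw [h2, h3] at h1
    exact h1.symm

theorem infPlay_getD (L : List A.E) (v : A.V) (d : A.E)
    (hpath : A.PathFrom v L (A.source d)) (hd : A.target d = A.source d) :
    A.InfPlay v (fun k => L.getD k d) := by
  induction L generalizing v with
  | nil =>
    have hv : v = A.source d := hpath
    exact ⟨hv.symm, fun k => by simpa using hd⟩
  | cons e L ih =>
    obtain ⟨hsrc, hp⟩ := (pathFrom_cons A).mp hpath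
    have IH := ih (A.target e) hp
    refine ⟨by simpa using hsrc, ?_⟩
    intro k
    cases k with
    | zero =>
      have := IH.1
      simpa using this.symm
    | succ k => simpa using IH.2 k

theorem prefixList_getD (L : List A.E) (d : A.E) {k : ℕ} (hk : k ≤ L.length) :
    A.prefixList (fun j => L.getD j d) k = L.take k := by
  apply List.ext_getElem
  · simp [Arena.prefixList]; omega
  · intro m h1 h2
    simp only [Arena.prefixList, List.length_ofFn] at h1
    have hm : m < L.length := by omega
    simp only [Arena.prefixList, List.getElem_ofFn, List.getElem_take]
    exact List.getD_eq_getElem L d hm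

theorem getD_append_left' {α : Type} (l₁ l₂ : List α) (d : α) (k : ℕ) (h : k < l₁.length) :
    (l₁ ++ l₂).getD k d = l₁.getD k d := by
  simp [List.getD_eq_getElem?_getD, List.getElem?_append_left h]

theorem getD_append_right' {α : Type} (l₁ l₂ : List α) (d : α) (k : ℕ) (h : l₁.length ≤ k) :
    (l₁ ++ l₂).getD k d = l₂.getD (k - l₁.length) d := by
  simp [List.getD_eq_getElem?_getD, List.getElem?_append_right h]

end Generic

/-! ### The specific arena -/

variable (n q : ℕ)

abbrev Vtx := (Unit ⊕ Fin n) ⊕ (Unit ⊕ Unit)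
abbrev Edg := (Fin n ⊕ Fin n × (Fin n × Fin q)) ⊕ (Fin n ⊕ (Fin q ⊕ Unit))
abbrev Col := (Fin n × Fin q ⊕ Fin n) ⊕ (Fin q ⊕ Unit)

def uN : Vtx n := Sum.inl (Sum.inl ())
def vN (i : Fin n) : Vtx n := Sum.inl (Sum.inr i)
def tN : Vtx n := Sum.inr (Sum.inl ())
def zN : Vtx n := Sum.inr (Sum.inr ())

def eStart (i : Fin n) : Edg n q := Sum.inl (Sum.inl i)
def eLoop (i : Fin n) (p : Fin n × Fin q) : Edg n q := Sum.inl (Sum.inr (i, p))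
def eQry (i : Fin n) : Edg n q := Sum.inr (Sum.inl i)
def eAns (a : Fin q) : Edg n q := Sum.inr (Sum.inr (Sum.inl a))
def eZ : Edg n q := Sum.inr (Sum.inr (Sum.inr ()))

def starC : Col n q := Sum.inr (Sum.inr ())
def bcC (p : Fin n × Fin q) : Col n q := Sum.inl (Sum.inl p)
def qryC (i : Fin n) : Col n q := Sum.inl (Sum.inr i)
def ansC (a : Fin q) : Col n q := Sum.inr (Sum.inl a)

def src : Edg n q → Vtx n
  | Sum.inl (Sum.inl _) => uN n
  | Sum.inl (Sum.inr (i, _)) => vN n i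
  | Sum.inr (Sum.inl i) => vN n i
  | Sum.inr (Sum.inr (Sum.inl _)) => tN n
  | Sum.inr (Sum.inr (Sum.inr _)) => zN n

def tgt : Edg n q → Vtx n
  | Sum.inl (Sum.inl i) => vN n i
  | Sum.inl (Sum.inr (i, _)) => vN n i
  | Sum.inr (Sum.inl _) => tN n
  | Sum.inr (Sum.inr (Sum.inl _)) => uN n
  | Sum.inr (Sum.inr (Sum.inr _)) => zN n

def ecol : Edg n q → Col n q
  | Sum.inl (Sum.inl _) => starC n q
  | Sum.inl (Sum.inr (_, p)) => bcC n q p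
  | Sum.inr (Sum.inl i) => qryC n q i
  | Sum.inr (Sum.inr (Sum.inl a)) => ansC n q a
  | Sum.inr (Sum.inr (Sum.inr _)) => starC n q

abbrev myA (hn : 0 < n) (hq : 0 < q) : Arena (Col n q) where
  V := Vtx n
  E := Edg n q
  finV := inferInstance
  finE := inferInstance
  isP0 := fun v => v = tN n
  source := src n q
  target := tgt n q
  col := ecol n q
  out := by
    rintro ((⟨⟩ | i) | (⟨⟩ | ⟨⟩))
    · exact ⟨eStart n q ⟨0, hn⟩, rfl⟩
    · exact ⟨eQry n q i, rfl⟩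
    · exact ⟨eAns n q ⟨0, hq⟩, rfl⟩
    · exact ⟨eZ n q, rfl⟩

@[simp] theorem myA_source (hn : 0 < n) (hq : 0 < q) (e : Edg n q) :
    (myA n q hn hq).source e = src n q e := rfl

@[simp] theorem myA_target (hn : 0 < n) (hq : 0 < q) (e : Edg n q) :
    (myA n q hn hq).target e = tgt n q e := rfl

@[simp] theorem myA_col (hn : 0 < n) (hq : 0 < q) (e : Edg n q) :
    (myA n q hn hq).col e = ecol n q e := rfl

theorem myA_mstate (hn : 0 < n) (hq : 0 < q) {M : Type} (δ : M → Edg n q → M) (m0 : M)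
    (es : List (Edg n q)) : (myA n q hn hq).mstate δ m0 es = List.foldl δ m0 es := rfl

/-- memory update of the `q`-state strategy: a broadcast `(j, a)` on track `i`
sets the register to `a` whenever `j = i`. -/
def delta1 : Fin q → Edg n q → Fin q := fun m e =>
  match e with
  | Sum.inl (Sum.inr (i, j, a)) => if j = i then a else m
  | _ => m

def F1 (hn : 0 < n) : Vtx n → Fin q → Edg n q
  | Sum.inl (Sum.inl _), _ => eStart n q ⟨0, hn⟩
  | Sum.inl (Sum.inr i), _ => eQry n q i
  | Sum.inr (Sum.inl _), m => eAns n q m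
  | Sum.inr (Sum.inr _), _ => eZ n q

def S1 (hn : 0 < n) (hq : 0 < q) : (myA n q hn hq).Strategy :=
  fun v es => F1 n q hn ((myA n q hn hq).ptarget v es)
    ((myA n q hn hq).mstate (delta1 n q) ⟨0, hq⟩ es)

theorem srcF1 (hn : 0 < n) : ∀ (x : Vtx n) (m : Fin q), src n q (F1 n q hn x m) = x := by
  rintro ((⟨⟩ | i) | (⟨⟩ | ⟨⟩)) m <;> rfl

/-! ### classification of edges by source -/

theorem class_u (e : Edg n q) (h : src n q e = uN n) : ∃ i, e = eStart n q i := by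
  rcases e with (i | ⟨i, p⟩) | (i | (a | ⟨⟩))
  · exact ⟨i, rfl⟩
  all_goals simp [src, uN, vN, tN, zN] at h

theorem class_v (i₀ : Fin n) (e : Edg n q) (h : src n q e = vN n i₀) :
    (∃ p, e = eLoop n q i₀ p) ∨ e = eQry n q i₀ := by
  rcases e with (i | ⟨i, p⟩) | (i | (a | ⟨⟩))
  · simp [src, uN, vN] at h
  · left
    simp only [src, vN, Sum.inl.injEq, Sum.inr.injEq] at h
    subst h
    exact ⟨p, rfl⟩
  · right
    simp only [src, vN, Sum.inl.injEq, Sum.inr.injEq] at h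
    subst h
    rfl
  · simp [src, tN, vN] at h
  · simp [src, zN, vN] at h

theorem class_t (e : Edg n q) (h : src n q e = tN n) : ∃ a, e = eAns n q a := by
  rcases e with (i | ⟨i, p⟩) | (i | (a | ⟨⟩))
  · simp [src, uN, tN] at h
  · simp [src, vN, tN] at h
  · simp [src, vN, tN] at h
  · exact ⟨a, rfl⟩
  · simp [src, zN, tN] at h

/-! ### the key lists -/

def loopsL (w : Fin n → Fin q) (i : Fin n) : List (Edg n q) :=
  (List.finRange n).map fun j => eLoop n q i (j, w j)

def esL (w : Fin n → Fin q) (i : Fin n) : List (Edg n q) :=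
  eStart n q i :: (loopsL n q w i ++ [eQry n q i])

@[simp] theorem loopsL_len (w : Fin n → Fin q) (i : Fin n) :
    (loopsL n q w i).length = n := by simp [loopsL]

@[simp] theorem esL_len (w : Fin n → Fin q) (i : Fin n) :
    (esL n q w i).length = n + 2 := by simp [esL]

theorem esL_get_zero (w : Fin n → Fin q) (i : Fin n) (h : 0 < (esL n q w i).length) :
    (esL n q w i)[0] = eStart n q i := rfl

theorem esL_get_mid (w : Fin n → Fin q) (i : Fin n) (m : ℕ) (hm : m < n)
    (h : m + 1 < (esL n q w i).length) :
    (esL n q w i)[m + 1] = eLoop n q i (⟨m, hm⟩, w ⟨m, hm⟩) := by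
  simp [esL, loopsL, List.getElem_append_left, hm]

theorem esL_get_last (w : Fin n → Fin q) (i : Fin n) (h : n + 1 < (esL n q w i).length) :
    (esL n q w i)[n + 1] = eQry n q i := by
  simp [esL, List.getElem_append_right, loopsL]

theorem ptarget_esL (hn : 0 < n) (hq : 0 < q) (w : Fin n → Fin q) (i : Fin n) :
    (myA n q hn hq).ptarget (uN n) (esL n q w i) = tN n := by
  have : esL n q w i = (eStart n q i :: loopsL n q w i) ++ [eQry n q i] := by
    simp [esL]
  rw [this, ptarget_append]
  rfl

theorem keepfold {α β : Type} [DecidableEq α] (g : α → β) (i : α) :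
    ∀ (l : List α) (m : β), i ∉ l →
      List.foldl (fun m j => if j = i then g j else m) m l = m := by
  intro l
  induction l with
  | nil => intro m _; rfl
  | cons j l ih =>
    intro m h
    have hj : j ≠ i := fun hji => h (by rw [hji]; exact List.mem_cons_self)
    have hl : i ∉ l := fun hl => h (List.mem_cons_of_mem _ hl)
    simp only [List.foldl_cons, if_neg hj]
    exact ih m hl

theorem setfold {α β : Type} [DecidableEq α] (g : α → β) (i : α) :
    ∀ (l : List α) (m : β), i ∈ l →
      List.foldl (fun m j => if j = i then g j else m) m l = g i := by
  intro l
  induction l with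
  | nil => intro m h; simp at h
  | cons j l ih =>
    intro m h
    by_cases hl : i ∈ l
    · simp only [List.foldl_cons]
      exact ih _ hl
    · have hj : j = i := by
        rcases List.mem_cons.mp h with h1 | h2
        · exact h1.symm
        · exact absurd h2 hl
      subst hj
      simp only [List.foldl_cons, if_pos rfl]
      exact keepfold g j l (g j) hl

theorem foldl_delta1_esL (w : Fin n → Fin q) (i : Fin n) (m : Fin q) :
    List.foldl (delta1 n q) m (esL n q w i) = w i := by
  have h1 : esL n q w i = (eStart n q i :: loopsL n q w i) ++ [eQry n q i] := by simp [esL]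
  rw [h1, List.foldl_append]
  have h2 : List.foldl (delta1 n q) m (eStart n q i :: loopsL n q w i) = w i := by
    simp only [List.foldl_cons]
    have hstart : delta1 n q m (eStart n q i) = m := rfl
    rw [hstart]
    simp only [loopsL, List.foldl_map]
    have : (fun (m : Fin q) (j : Fin n) => delta1 n q m (eLoop n q i (j, w j)))
        = fun m j => if j = i then w j else m := rfl
    rw [this]
    exact setfold w i (List.finRange n) m (List.mem_finRange i)
  rw [h2]
  rfl

/-! ### the forced-answer lemma -/

theorem forced (hn : 0 < n) (hq : 0 < q) (S₂ : (myA n q hn hq).Strategy)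
    (hS₂ : (myA n q hn hq).IsStrategy S₂)
    (hsub : (myA n q hn hq).colSet S₂ (uN n) ⊆
      (myA n q hn hq).colSet (S1 n q hn hq) (uN n))
    (w : Fin n → Fin q) (i : Fin n) :
    S₂ (uN n) (esL n q w i) = eAns n q (w i) := by
  -- the answer S₂ gives at t
  have hsrc : src n q (S₂ (uN n) (esL n q w i)) = tN n := by
    have h := hS₂ (uN n) (esL n q w i)
    rw [ptarget_esL] at h
    simpa using h
  obtain ⟨α, ha⟩ := class_t n q _ hsrc
  -- the infinite play P extending esL
  set L : List (Edg n q) := esL n q w i ++ [eAns n q α, eStart n q i] with hL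
  set d : Edg n q := eLoop n q i (i, w i) with hd
  set P : ℕ → Edg n q := fun k => L.getD k d with hP
  have hLlen : L.length = n + 4 := by simp [hL]
  -- path structure
  have hpath : (myA n q hn hq).PathFrom (uN n) L ((myA n q hn hq).source d) := by
    have hloops : ∀ l : List (Fin n),
        (myA n q hn hq).PathFrom (vN n i) (l.map fun j => eLoop n q i (j, w j)) (vN n i) := by
      intro l
      induction l with
      | nil => rfl
      | cons j l ih => exact ⟨rfl, ih⟩
    have h1 : (myA n q hn hq).PathFrom (uN n) (esL n q w i) (tN n) := by
      refine ⟨rfl, ?_⟩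
      exact pathFrom_append (myA n q hn hq) (hloops (List.finRange n)) ⟨rfl, rfl⟩
    have h2 : (myA n q hn hq).PathFrom (tN n) [eAns n q α, eStart n q i]
        ((myA n q hn hq).source d) := ⟨rfl, rfl, rfl⟩
    exact pathFrom_append (myA n q hn hq) h1 h2
  have hinf : (myA n q hn hq).InfPlay (uN n) P :=
    infPlay_getD (myA n q hn hq) L (uN n) d hpath rfl
  -- values of P
  have hPval : ∀ k, k < n + 2 → P k = (esL n q w i).getD k d := by
    intro k hk
    simp only [hP, hL]
    rw [getD_append_left' _ _ _ _ (by rw [esL_len]; exact hk)]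
  have hP0 : P 0 = eStart n q i := by
    rw [hPval 0 (by omega), List.getD_eq_getElem _ _ (by rw [esL_len]; omega)]
    exact esL_get_zero n q w i _
  have hPmid : ∀ m (hm : m < n), P (m + 1) = eLoop n q i (⟨m, hm⟩, w ⟨m, hm⟩) := by
    intro m hm
    rw [hPval (m + 1) (by omega), List.getD_eq_getElem _ _ (by rw [esL_len]; omega)]
    exact esL_get_mid n q w i m hm _
  have hPq : P (n + 1) = eQry n q i := by
    rw [hPval (n + 1) (by omega), List.getD_eq_getElem _ _ (by rw [esL_len]; omega)]
    exact esL_get_last n q w i _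
  have hPa : P (n + 2) = eAns n q α := by
    simp only [hP, hL]
    rw [getD_append_right' _ _ _ _ (by rw [esL_len])]
    simp
  have hPs : P (n + 3) = eStart n q i := by
    simp only [hP, hL]
    rw [getD_append_right' _ _ _ _ (by rw [esL_len]; omega)]
    have : n + 3 - (esL n q w i).length = 1 := by rw [esL_len]; omega
    rw [this]
    rfl
  have hPd : ∀ k, n + 4 ≤ k → P k = d := by
    intro k hk
    simp only [hP]
    exact List.getD_eq_default L d (by omega)
  -- target values
  have htgt : ∀ k, ((myA n q hn hq).target (P k) = tN n) ↔ k = n + 1 := by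
    intro k
    by_cases h0 : k = 0
    · subst h0; rw [hP0]
      constructor
      · intro h; exact absurd h (by simp [tgt, eStart, vN, tN])
      · intro h; omega
    by_cases h1 : k ≤ n
    · obtain ⟨m, rfl⟩ : ∃ m, k = m + 1 := ⟨k - 1, by omega⟩
      rw [hPmid m (by omega)]
      constructor
      · intro h; exact absurd h (by simp [tgt, eLoop, vN, tN])
      · intro h; omega
    by_cases h2 : k = n + 1
    · subst h2; rw [hPq]
      constructor
      · intro _; rfl
      · intro _; rfl
    by_cases h3 : k = n + 2
    · subst h3; rw [hPa]
      constructor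
      · intro h; exact absurd h (by simp [tgt, eAns, uN, tN])
      · intro h; omega
    by_cases h4 : k = n + 3
    · subst h4; rw [hPs]
      constructor
      · intro h; exact absurd h (by simp [tgt, eStart, vN, tN])
      · intro h; omega
    · rw [hPd k (by omega), hd]
      constructor
      · intro h; exact absurd h (by simp [tgt, eLoop, vN, tN])
      · intro h; omega
  have hnode : ∀ l, ((myA n q hn hq).ptarget (uN n) ((myA n q hn hq).prefixList P l) = tN n)
      ↔ l = n + 2 := by
    intro l
    cases l with
    | zero =>
      constructor
      · intro h
        exact absurd h (by simp [Arena.prefixList, Arena.ptarget, uN, tN])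
      · intro h; omega
    | succ k =>
      rw [ptarget_prefix_succ, htgt k]
      omega
  -- the prefix of length n+2 is esL
  have hpre : (myA n q hn hq).prefixList P (n + 2) = esL n q w i := by
    have h1 : (myA n q hn hq).prefixList P (n + 2) = L.take (n + 2) :=
      prefixList_getD (myA n q hn hq) L d (by omega)
    rw [h1, hL, List.take_left' (esL_len n q w i)]
  -- consistency of P with S₂
  have hcons : ∀ k, (myA n q hn hq).ConsFrom S₂ (uN n) ((myA n q hn hq).prefixList P k) := by
    intro k p e r hdec hp0
    obtain ⟨hp, he⟩ := consFrom_decomp (myA n q hn hq) P hdec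
    have hp0' : (myA n q hn hq).ptarget (uN n) p = tN n := hp0
    rw [hp] at hp0'
    have hplen : p.length = n + 2 := (hnode p.length).mp hp0'
    rw [hplen] at hp he
    rw [hp, hpre, he, hPa, ha]
  -- containment
  have hmem2 : (fun k => (myA n q hn hq).col (P k)) ∈ (myA n q hn hq).colSet S₂ (uN n) :=
    ⟨P, hinf, hcons, rfl⟩
  obtain ⟨P', hinf', hcons', hγ⟩ := hsub hmem2
  have hcoleq : ∀ k, (myA n q hn hq).col (P' k) = (myA n q hn hq).col (P k) :=
    fun k => (congrFun hγ k).symm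
  -- analysis of P'
  have hsrc0 : src n q (P' 0) = uN n := hinf'.1
  obtain ⟨i₀, h0'⟩ := class_u n q (P' 0) hsrc0
  have htgt' : ∀ l, l ≤ n → (myA n q hn hq).target (P' l) = vN n i₀ := by
    intro l
    induction l with
    | zero => intro _; rw [h0']; rfl
    | succ l ih =>
      intro hl
      have hsrc' : src n q (P' (l + 1)) = vN n i₀ := by
        have h := hinf'.2 l
        rw [ih (by omega)] at h
        exact h.symm
      rcases class_v n q i₀ _ hsrc' with ⟨p, hp⟩ | hp
      · rw [hp]; rfl
      · exfalso
        have hc := hcoleq (l + 1)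
        rw [hp, hPmid l (by omega)] at hc
        exact absurd hc (by simp [ecol, eQry, eLoop, qryC, bcC])
  have hval' : ∀ m (hm : m < n), P' (m + 1) = eLoop n q i₀ (⟨m, hm⟩, w ⟨m, hm⟩) := by
    intro m hm
    have hsrc' : src n q (P' (m + 1)) = vN n i₀ := by
      have h := hinf'.2 m
      rw [htgt' m (by omega)] at h
      exact h.symm
    rcases class_v n q i₀ _ hsrc' with ⟨p, hp⟩ | hp
    · have hc := hcoleq (m + 1)
      rw [hp, hPmid m hm] at hc
      have hpp : p = (⟨m, hm⟩, w ⟨m, hm⟩) := by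
        simpa [ecol, eLoop, bcC] using hc
      rw [hp, hpp]
    · exfalso
      have hc := hcoleq (m + 1)
      rw [hp, hPmid m hm] at hc
      exact absurd hc (by simp [ecol, eQry, eLoop, qryC, bcC])
  have hq' : P' (n + 1) = eQry n q i₀ ∧ i₀ = i := by
    have hsrc' : src n q (P' (n + 1)) = vN n i₀ := by
      have h := hinf'.2 n
      rw [htgt' n le_rfl] at h
      exact h.symm
    rcases class_v n q i₀ _ hsrc' with ⟨p, hp⟩ | hp
    · exfalso
      have hc := hcoleq (n + 1)
      rw [hp, hPq] at hc
      exact absurd hc (by simp [ecol, eQry, eLoop, qryC, bcC])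
    · have hc := hcoleq (n + 1)
      rw [hp, hPq] at hc
      have : i₀ = i := by simpa [ecol, eQry, qryC] using hc
      exact ⟨hp, this⟩
  obtain ⟨hq1, hii⟩ := hq'
  rw [hii] at h0' hval' hq1
  -- the prefix of P' of length n+2 is esL w i
  have hpre' : (myA n q hn hq).prefixList P' (n + 2) = esL n q w i := by
    apply List.ext_getElem
    · simp [Arena.prefixList]
      try omega
    · intro m h1 h2
      simp only [Arena.prefixList, List.length_ofFn] at h1
      have hofn : ((myA n q hn hq).prefixList P' (n + 2))[m]'(by simp [Arena.prefixList]; try omega) = P' m := by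
        simp only [Arena.prefixList, List.getElem_ofFn]
      rw [hofn]
      by_cases hm0 : m = 0
      · subst hm0
        rw [h0']
        exact (esL_get_zero n q w i _).symm
      by_cases hmn : m ≤ n
      · obtain ⟨m', rfl⟩ : ∃ m', m = m' + 1 := ⟨m - 1, by omega⟩
        rw [hval' m' (by omega)]
        exact (esL_get_mid n q w i m' (by omega) _).symm
      · have hm1 : m = n + 1 := by omega
        subst hm1
        rw [hq1]
        exact (esL_get_last n q w i _).symm
  -- consistency of P' with S₁ at the t-node
  have hc3 := hcons' (n + 3) ((myA n q hn hq).prefixList P' (n + 2)) (P' (n + 2)) []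
    (by
      rw [show n + 3 = (n + 2) + 1 from rfl, prefixList_succ])
    (by
      show (myA n q hn hq).ptarget (uN n) ((myA n q hn hq).prefixList P' (n + 2)) = tN n
      rw [hpre']
      exact ptarget_esL n q hn hq w i)
  rw [hpre'] at hc3
  have hS1val : S1 n q hn hq (uN n) (esL n q w i) = eAns n q (w i) := by
    show F1 n q hn ((myA n q hn hq).ptarget (uN n) (esL n q w i))
      ((myA n q hn hq).mstate (delta1 n q) ⟨0, hq⟩ (esL n q w i)) = eAns n q (w i)
    rw [ptarget_esL, myA_mstate, foldl_delta1_esL]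
    rfl
  rw [hS1val] at hc3
  -- compare colors at position n+2
  have hfin := hcoleq (n + 2)
  rw [hc3, hPa] at hfin
  have hwα : w i = α := by simpa [ecol, eAns, ansC] using hfin
  rw [ha, hwα]

end ChromLB

open ChromLB

/-- For every `n, q ≥ 1` there exist an arena with `n + 3` nodes over a finite
set of colors, a node `u`, and a `q`-state strategy `S₁` of Player 0, such that
every chromatic `Q`-state strategy `S₂` of Player 0 with
`col(S₂, u) ⊆ col(S₁, u)` satisfies `Q ≥ q ^ n`. -/
theorem chromatic_lower_bound (n q : ℕ) (hn : 1 ≤ n) (hq : 1 ≤ q) :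
    ∃ (C : Type) (_ : Fintype C) (A : Arena C), Fintype.card A.V = n + 3 ∧
      ∃ (u : A.V) (S₁ : A.Strategy), A.IsStrategy S₁ ∧ A.IsQState S₁ q ∧
        ∀ (Q : ℕ) (S₂ : A.Strategy), A.IsStrategy S₂ → A.IsChromaticQState S₂ Q →
          A.colSet S₂ u ⊆ A.colSet S₁ u → q ^ n ≤ Q := by
  have hn0 : 0 < n := hn
  have hq0 : 0 < q := hq
  refine ⟨Col n q, inferInstance, myA n q hn0 hq0, ?_, uN n, S1 n q hn0 hq0, ?_, ?_, ?_⟩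
  · show Fintype.card (Vtx n) = n + 3
    simp only [Fintype.card_sum, Fintype.card_unit, Fintype.card_fin]
    omega
  · intro v es
    exact srcF1 n q hn0 _ _
  · refine ⟨Fin q, inferInstance, ⟨0, hq0⟩, delta1 n q, by simp, ?_⟩
    intro v1 es1 v2 es2 h1 h2
    show F1 n q hn0 _ _ = F1 n q hn0 _ _
    rw [h1, h2]
  · intro Q S₂ hS₂ hchrom hsub
    obtain ⟨M, hM, m0, δ, hcard, ⟨σ, hσ⟩, hmem⟩ := hchrom
    -- fold along colors
    have foldl_col : ∀ (es : List (Edg n q)) (m : M),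
        List.foldl δ m es = List.foldl σ m (es.map (ecol n q)) := by
      intro es
      induction es with
      | nil => intro m; rfl
      | cons e es ih =>
        intro m
        simp only [List.foldl_cons, List.map_cons]
        rw [show δ m e = σ m (ecol n q e) from hσ m e]
        exact ih _
    set ψ : (Fin n → Fin q) → M :=
      fun w => List.foldl σ m0 (starC n q :: (List.finRange n).map fun j => bcC n q (j, w j))
      with hψdef
    have hψ : ∀ (w : Fin n → Fin q) (i : Fin n),
        List.foldl δ m0 (eStart n q i :: loopsL n q w i) = ψ w := by
      intro w i
      rw [foldl_col]
      simp only [hψdef, List.map_cons, loopsL, List.map_map]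
      rfl
    have hmst : ∀ (w : Fin n → Fin q) (i : Fin n),
        (myA n q hn0 hq0).mstate δ m0 (esL n q w i) = σ (ψ w) (qryC n q i) := by
      intro w i
      rw [myA_mstate]
      have h1 : esL n q w i = (eStart n q i :: loopsL n q w i) ++ [eQry n q i] := by
        simp [esL]
      rw [h1, List.foldl_append, hψ w i]
      simp only [List.foldl_cons, List.foldl_nil]
      rw [hσ]
      rfl
    have hinj : Function.Injective ψ := by
      intro w w' hww
      funext i
      have h1 : S₂ (uN n) (esL n q w i) = S₂ (uN n) (esL n q w' i) := by
        apply hmem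
        · rw [ptarget_esL, ptarget_esL]
        · rw [hmst, hmst, hww]
      rw [forced n q hn0 hq0 S₂ hS₂ hsub w i,
        forced n q hn0 hq0 S₂ hS₂ hsub w' i] at h1
      simpa [eAns] using h1
    have hcardle : Fintype.card (Fin n → Fin q) ≤ Q := by
      rw [← hcard]
      exact @Fintype.card_le_of_injective _ _ _ hM ψ hinj
    calc q ^ n = Fintype.card (Fin n → Fin q) := by simp
    _ ≤ Q := hcardle
end
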